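/- Let T > 0, let a, b, c, f : (0,T) × (0,1) → ℝ with sup_{0<x<1, 0<t≤T} |f(t,x)| < +∞, and let u ∈ C⁰([0,T] × [0,1]) with u[t] ∈ C²((0,1)) for almost all t ∈ (0,T), ∂u/∂t existing and continuous on (0,T) × [0,1], and ∂u/∂t = a·∂²u/∂x² + b·∂u/∂x + c·u + f for almost all t ∈ (0,T) and all x ∈ (0,1). Suppose a(t,x) ≥ 0 on (0,T)×(0,1) and σ := − sup_{0<x<1, t∈(0,T)} c(t,x) > 0. Then for all ζ ∈ [0,σ) and t ∈ (0,T]: ‖u[t]‖_∞ ≤ max( exp(−ζt)·‖u[0]‖_∞, sup_{0<s≤t} max( |u(s,0)|, |u(s,1)|, ‖f[s]‖_∞/(σ−ζ) )·exp(−ζ(t−s)) ). -/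

import Mathlib

open Set MeasureTheory Filter
open Topology

/-- Second derivative test: at an interior maximum over `[0,1]`, the second
derivative is nonpositive. -/
lemma lem4_3_aux_second_deriv_nonpos {g g' : ℝ → ℝ} {g2 x : ℝ}
    (hx : x ∈ Set.Ioo (0:ℝ) 1)
    (hg : ∀ y ∈ Set.Ioo (0:ℝ) 1, HasDerivAt g (g' y) y)
    (hg2 : HasDerivAt g' g2 x)
    (hmax : ∀ y ∈ Set.Icc (0:ℝ) 1, g y ≤ g x) :
    g2 ≤ 0 := by
  by_contra hpos
  push_neg at hpos
  have hloc : IsLocalMax g x :=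
    Filter.eventually_of_mem (Icc_mem_nhds hx.1 hx.2) hmax
  have hgx0 : g' x = 0 := hloc.hasDerivAt_eq_zero (hg x hx)
  have hslope := hasDerivAt_iff_tendsto_slope.mp hg2
  have hslope' : Tendsto (slope g' x) (𝓝[>] x) (𝓝 g2) :=
    hslope.mono_left (nhdsWithin_mono x (fun y hy => ne_of_gt hy))
  have hev : ∀ᶠ y in 𝓝[>] x, 0 < slope g' x y := hslope'.eventually (eventually_gt_nhds hpos)
  have hmem : ∀ᶠ y in 𝓝[>] x, y ∈ Ioo x 1 :=
    Filter.eventually_of_mem (Ioo_mem_nhdsGT_of_mem ⟨le_rfl, hx.2⟩) (fun _ h => h)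
  obtain ⟨v, hv, hsub⟩ := mem_nhdsGT_iff_exists_Ioo_subset.mp (hev.and hmem)
  have hxv1 : x < min v 1 := lt_min hv hx.2
  set z := (x + min v 1) / 2 with hzdef
  have hxz : x < z := by
    simp only [hzdef]; linarith
  have hz1 : z < 1 := by
    have : z < min v 1 := by simp only [hzdef]; linarith
    exact lt_of_lt_of_le this (min_le_right _ _)
  have hzv : z < v := by
    have : z < min v 1 := by simp only [hzdef]; linarith
    exact lt_of_lt_of_le this (min_le_left _ _)
  have hsubIoo : Icc x z ⊆ Ioo 0 1 := fun y hy => ⟨lt_of_lt_of_le hx.1 hy.1, lt_of_le_of_lt hy.2 hz1⟩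
  have hsm : StrictMonoOn g (Icc x z) := by
    apply strictMonoOn_of_deriv_pos (convex_Icc x z)
    · exact fun y hy => (hg y (hsubIoo hy)).continuousAt.continuousWithinAt
    · intro y hy
      rw [interior_Icc] at hy
      have hyIoo : y ∈ Ioo (0:ℝ) 1 := hsubIoo ⟨hy.1.le, hy.2.le⟩
      have hmem2 := hsub ⟨hy.1, lt_trans hy.2 hzv⟩
      have hsl := hmem2.1
      rw [slope_def_field, hgx0, sub_zero] at hsl
      have hyx : 0 < y - x := sub_pos.mpr hy.1
      have hgy : 0 < g' y := by
        have h2 : g' y = g' y / (y - x) * (y - x) := by field_simp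
        rw [h2]; exact mul_pos hsl hyx
      rw [(hg y hyIoo).deriv]
      exact hgy
  have hlt : g x < g z := hsm (left_mem_Icc.mpr hxz.le) (right_mem_Icc.mpr hxz.le) hxz
  have hz01 : z ∈ Icc (0:ℝ) 1 := ⟨le_trans hx.1.le hxz.le, hz1.le⟩
  exact absurd (hmax z hz01) (not_le.mpr hlt)

set_option maxHeartbeats 1000000 in
/-- **Lemma 4.3** (Karafyllis–Krstic): unweighted ISS-style maximum principle estimate
under the sign condition `σ = -sup c > 0`. -/
theorem lem4_3
    (T : ℝ) (hT : 0 < T)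
    (a b c f : ℝ → ℝ → ℝ)
    (hf_bdd : ∃ M : ℝ, ∀ t ∈ Set.Ioc (0:ℝ) T, ∀ x ∈ Set.Ioo (0:ℝ) 1, |f t x| ≤ M)
    (u ut ux uxx : ℝ → ℝ → ℝ)
    (hu_cont : ContinuousOn (fun p : ℝ × ℝ => u p.1 p.2) (Set.Icc 0 T ×ˢ Set.Icc 0 1))
    (hut : ∀ t ∈ Set.Ioo (0:ℝ) T, ∀ x ∈ Set.Icc (0:ℝ) 1,
      HasDerivAt (fun τ => u τ x) (ut t x) t)
    (hut_cont : ContinuousOn (fun p : ℝ × ℝ => ut p.1 p.2) (Set.Ioo 0 T ×ˢ Set.Icc 0 1))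
    (hC2_pde : ∀ᵐ t ∂(volume.restrict (Set.Ioo 0 T)),
      (∀ x ∈ Set.Ioo (0:ℝ) 1, HasDerivAt (u t) (ux t x) x) ∧
      (∀ x ∈ Set.Ioo (0:ℝ) 1, HasDerivAt (ux t) (uxx t x) x) ∧
      ContinuousOn (uxx t) (Set.Ioo 0 1) ∧
      (∀ x ∈ Set.Ioo (0:ℝ) 1,
        ut t x = a t x * uxx t x + b t x * ux t x + c t x * u t x + f t x))
    (ha : ∀ t ∈ Set.Ioo (0:ℝ) T, ∀ x ∈ Set.Ioo (0:ℝ) 1, 0 ≤ a t x)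
    (σ : ℝ)
    (hσ_def : σ = - sSup ((fun p : ℝ × ℝ => c p.1 p.2) '' (Set.Ioo 0 T ×ˢ Set.Ioo 0 1)))
    (hσ : 0 < σ) :
    ∀ ζ ∈ Set.Ico (0:ℝ) σ, ∀ t ∈ Set.Ioc (0:ℝ) T,
      sSup ((fun x => |u t x|) '' Set.Icc 0 1) ≤
        max (Real.exp (-ζ * t) * sSup ((fun x => |u 0 x|) '' Set.Icc 0 1))
          (sSup ((fun s =>
              max (max (|u s 0|) (|u s 1|))
                (sSup ((fun x => |f s x|) '' Set.Ioo 0 1) / (σ - ζ)) *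
              Real.exp (-ζ * (t - s))) '' Set.Ioc 0 t)) := by
  obtain ⟨Mf, hMf⟩ := hf_bdd
  rintro ζ ⟨hζ0, hζσ⟩
  have hσζ : 0 < σ - ζ := sub_pos.mpr hζσ
  -- global bound on |u|
  obtain ⟨Cu, hCu⟩ : ∃ C : ℝ, ∀ p ∈ Set.Icc (0:ℝ) T ×ˢ Set.Icc (0:ℝ) 1, |u p.1 p.2| ≤ C := by
    obtain ⟨C, hC⟩ := (isCompact_Icc.prod isCompact_Icc).exists_bound_of_continuousOn hu_cont
    exact ⟨C, fun p hp => hC p hp⟩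
  set M : ℝ → ℝ := fun t => sSup ((fun x => |u t x|) '' Set.Icc 0 1) with hMdef
  set F : ℝ → ℝ := fun s => sSup ((fun x => |f s x|) '' Set.Ioo 0 1) with hFdef
  set H : ℝ → ℝ := fun s => max (max (|u s 0|) (|u s 1|)) (F s / (σ - ζ)) with hHdef
  -- basic facts about M
  have hone : (1:ℝ) ∈ Set.Icc (0:ℝ) 1 := ⟨zero_le_one, le_rfl⟩
  have hzero : (0:ℝ) ∈ Set.Icc (0:ℝ) 1 := ⟨le_rfl, zero_le_one⟩
  have hMne : ∀ t : ℝ, ((fun x => |u t x|) '' Set.Icc 0 1).Nonempty :=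
    fun t => ⟨|u t 0|, mem_image_of_mem _ hzero⟩
  have hMbdd : ∀ t ∈ Set.Icc (0:ℝ) T, BddAbove ((fun x => |u t x|) '' Set.Icc 0 1) := by
    rintro t ht
    refine ⟨Cu, ?_⟩
    rintro y ⟨x, hx, rfl⟩
    exact hCu (t, x) ⟨ht, hx⟩
  have hM_le : ∀ t ∈ Set.Icc (0:ℝ) T, ∀ x ∈ Set.Icc (0:ℝ) 1, |u t x| ≤ M t :=
    fun t ht x hx => le_csSup (hMbdd t ht) (mem_image_of_mem _ hx)
  have hM0 : ∀ t ∈ Set.Icc (0:ℝ) T, 0 ≤ M t :=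
    fun t ht => le_trans (abs_nonneg _) (hM_le t ht 0 hzero)
  have hM_ex : ∀ t ∈ Set.Icc (0:ℝ) T, ∃ x ∈ Set.Icc (0:ℝ) 1,
      (∀ y ∈ Set.Icc (0:ℝ) 1, |u t y| ≤ |u t x|) ∧ M t = |u t x| := by
    intro t ht
    have hcont : ContinuousOn (fun x => |u t x|) (Set.Icc 0 1) := by
      have hpair : Continuous (fun x : ℝ => ((t, x) : ℝ × ℝ)) := by fun_prop
      have h2 := hu_cont.comp hpair.continuousOn
        (fun x (hx : x ∈ Set.Icc (0:ℝ) 1) => Set.mk_mem_prod ht hx)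
      exact h2.abs
    obtain ⟨x, hx, hmax⟩ := isCompact_Icc.exists_isMaxOn ⟨0, hzero⟩ hcont
    refine ⟨x, hx, fun y hy => hmax hy, ?_⟩
    apply le_antisymm
    · exact csSup_le (hMne t) (by rintro y ⟨x', hx', rfl⟩; exact hmax hx')
    · exact hM_le t ht x hx
  -- continuity of M
  have hMcont : ContinuousOn M (Set.Icc 0 T) := by
    have hcpt : IsCompact (Set.Icc (0:ℝ) T ×ˢ Set.Icc (0:ℝ) 1) := isCompact_Icc.prod isCompact_Icc
    have huc := hcpt.uniformContinuousOn_of_continuous hu_cont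
    rw [Metric.uniformContinuousOn_iff] at huc
    rw [Metric.continuousOn_iff]
    intro t ht ε hε
    obtain ⟨δ, hδ, hδ'⟩ := huc (ε/2) (by positivity)
    refine ⟨δ, hδ, fun t' ht' hd => ?_⟩
    have hbd : ∀ s ∈ Set.Icc (0:ℝ) T, ∀ s' ∈ Set.Icc (0:ℝ) T, dist s s' < δ →
        M s ≤ M s' + ε/2 := by
      intro s hs s' hs' hss
      refine csSup_le (hMne s) ?_
      rintro y ⟨x, hx, rfl⟩
      have h1 : dist ((s, x) : ℝ × ℝ) ((s', x) : ℝ × ℝ) < δ := by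
        rw [Prod.dist_eq]
        simp only [dist_self]
        simp only [max_lt_iff]
        exact ⟨hss, hδ⟩
      have h2 := hδ' (s, x) (Set.mk_mem_prod hs hx) (s', x) (Set.mk_mem_prod hs' hx) h1
      rw [Real.dist_eq] at h2
      have h3 : |u s x| - |u s' x| ≤ |u s x - u s' x| := abs_sub_abs_le_abs_sub _ _
      have h4 := hM_le s' hs' x hx
      linarith
    have hA := hbd t' ht' t ht hd
    have hB := hbd t ht t' ht' (by rwa [dist_comm])
    rw [Real.dist_eq, abs_sub_lt_iff]
    constructor <;> linarith
  -- F facts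
  have hFne : ∀ s : ℝ, ((fun x => |f s x|) '' Set.Ioo 0 1).Nonempty :=
    fun s => ⟨|f s (1/2)|, mem_image_of_mem _ (by norm_num)⟩
  have hFbdd : ∀ s ∈ Set.Ioc (0:ℝ) T, BddAbove ((fun x => |f s x|) '' Set.Ioo 0 1) := by
    rintro s hs
    exact ⟨Mf, by rintro y ⟨x, hx, rfl⟩; exact hMf s hs x hx⟩
  have hF_le : ∀ s ∈ Set.Ioc (0:ℝ) T, ∀ x ∈ Set.Ioo (0:ℝ) 1, |f s x| ≤ F s :=
    fun s hs x hx => le_csSup (hFbdd s hs) (mem_image_of_mem _ hx)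
  have hF0 : ∀ s ∈ Set.Ioc (0:ℝ) T, 0 ≤ F s :=
    fun s hs => le_trans (abs_nonneg _) (hF_le s hs (1/2) (by norm_num))
  have hF_bd : ∀ s ∈ Set.Ioc (0:ℝ) T, F s ≤ Mf :=
    fun s hs => csSup_le (hFne s) (by rintro y ⟨x, hx, rfl⟩; exact hMf s hs x hx)
  -- c is bounded above by -σ
  have hc : ∀ t ∈ Set.Ioo (0:ℝ) T, ∀ x ∈ Set.Ioo (0:ℝ) 1, c t x ≤ -σ := by
    intro t ht x hx
    by_cases hB : BddAbove ((fun p : ℝ × ℝ => c p.1 p.2) '' (Set.Ioo 0 T ×ˢ Set.Ioo 0 1))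
    · have h1 := le_csSup hB (mem_image_of_mem (fun p : ℝ × ℝ => c p.1 p.2)
        (Set.mk_mem_prod ht hx))
      have h2 : sSup ((fun p : ℝ × ℝ => c p.1 p.2) '' (Set.Ioo 0 T ×ˢ Set.Ioo 0 1)) = -σ := by
        rw [hσ_def]; ring
      rw [h2] at h1
      exact h1
    · rw [Real.sSup_of_not_bddAbove hB] at hσ_def
      rw [hσ_def] at hσ
      norm_num at hσ
  -- H bounds
  have hH_u0 : ∀ s : ℝ, |u s 0| ≤ H s := fun s => le_max_of_le_left (le_max_left _ _)
  have hH_u1 : ∀ s : ℝ, |u s 1| ≤ H s := fun s => le_max_of_le_left (le_max_right _ _)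
  have hH_F : ∀ s : ℝ, F s / (σ - ζ) ≤ H s := fun s => le_max_right _ _
  have hH0 : ∀ s : ℝ, 0 ≤ H s := fun s => le_trans (abs_nonneg _) (hH_u0 s)
  have hBdd : ∀ t ∈ Set.Ioc (0:ℝ) T,
      BddAbove ((fun s => H s * Real.exp (-ζ * (t - s))) '' Set.Ioc 0 t) := by
    intro t ht
    refine ⟨max Cu (Mf / (σ - ζ)), ?_⟩
    rintro y ⟨s, hs, rfl⟩
    have hsT : s ∈ Set.Ioc (0:ℝ) T := ⟨hs.1, hs.2.trans ht.2⟩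
    have hsIcc : s ∈ Set.Icc (0:ℝ) T := ⟨hs.1.le, hsT.2⟩
    have hHb : H s ≤ max Cu (Mf / (σ - ζ)) := by
      refine max_le (max_le ?_ ?_) ?_
      · exact le_max_of_le_left (hCu (s, 0) ⟨hsIcc, hzero⟩)
      · exact le_max_of_le_left (hCu (s, 1) ⟨hsIcc, hone⟩)
      · refine le_max_of_le_right ?_
        gcongr
        exact hF_bd s hsT
    have hexp1 : Real.exp (-ζ * (t - s)) ≤ 1 := by
      rw [Real.exp_le_one_iff]
      nlinarith [hs.2, hζ0]
    calc H s * Real.exp (-ζ * (t - s)) ≤ H s * 1 :=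
          mul_le_mul_of_nonneg_left hexp1 (hH0 s)
      _ = H s := mul_one _
      _ ≤ _ := hHb
  -- main key estimate for interior times
  have key : ∀ t₀ ∈ Set.Ioo (0:ℝ) T, M t₀ ≤ max (Real.exp (-ζ * t₀) * M 0)
      (sSup ((fun s => H s * Real.exp (-ζ * (t₀ - s))) '' Set.Ioc 0 t₀)) := by
    intro t₀ ht₀
    obtain ⟨ht₀0, ht₀T⟩ := ht₀
    set R := max (Real.exp (-ζ * t₀) * M 0)
      (sSup ((fun s => H s * Real.exp (-ζ * (t₀ - s))) '' Set.Ioc 0 t₀)) with hRdef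
    set K := Real.exp (ζ * t₀) * R with hKdef
    set m : ℝ → ℝ := fun t => Real.exp (ζ * t) * M t with hmdef
    have ht₀Ioc : t₀ ∈ Set.Ioc (0:ℝ) T := ⟨ht₀0, ht₀T.le⟩
    have hRH : ∀ s ∈ Set.Ioc (0:ℝ) t₀, H s * Real.exp (-ζ * (t₀ - s)) ≤ R :=
      fun s hs => le_max_of_le_right (le_csSup (hBdd t₀ ht₀Ioc) (mem_image_of_mem _ hs))
    have hKM0 : M 0 ≤ K := by
      have h1 : Real.exp (-ζ * t₀) * M 0 ≤ R := le_max_left _ _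
      have h2 := mul_le_mul_of_nonneg_left h1 (Real.exp_nonneg (ζ * t₀))
      refine le_trans (le_of_eq ?_) h2
      rw [← mul_assoc, ← Real.exp_add]
      have he : ζ * t₀ + -ζ * t₀ = 0 := by ring
      rw [he, Real.exp_zero, one_mul]
    have hK0 : 0 ≤ K := le_trans (hM0 0 ⟨le_rfl, hT.le⟩) hKM0
    have hKH : ∀ s ∈ Set.Ioc (0:ℝ) t₀, Real.exp (ζ * s) * H s ≤ K := by
      intro s hs
      have h2 := mul_le_mul_of_nonneg_left (hRH s hs) (Real.exp_nonneg (ζ * t₀))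
      refine le_trans (le_of_eq ?_) h2
      have he : Real.exp (ζ * s) = Real.exp (ζ * t₀) * Real.exp (-ζ * (t₀ - s)) := by
        rw [← Real.exp_add]; congr 1; ring
      rw [he]; ring
    have hKu0 : ∀ s ∈ Set.Ioc (0:ℝ) t₀, Real.exp (ζ * s) * |u s 0| ≤ K :=
      fun s hs => le_trans (mul_le_mul_of_nonneg_left (hH_u0 s) (Real.exp_nonneg _)) (hKH s hs)
    have hKu1 : ∀ s ∈ Set.Ioc (0:ℝ) t₀, Real.exp (ζ * s) * |u s 1| ≤ K :=
      fun s hs => le_trans (mul_le_mul_of_nonneg_left (hH_u1 s) (Real.exp_nonneg _)) (hKH s hs)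
    have hKF : ∀ s ∈ Set.Ioc (0:ℝ) t₀, Real.exp (ζ * s) * F s ≤ (σ - ζ) * K := by
      intro s hs
      have h1 : F s ≤ (σ - ζ) * H s := by
        have h := hH_F s
        rw [div_le_iff₀ hσζ] at h
        linarith
      have h2 : Real.exp (ζ * s) * F s ≤ Real.exp (ζ * s) * ((σ - ζ) * H s) :=
        mul_le_mul_of_nonneg_left h1 (Real.exp_nonneg _)
      have h3 := mul_le_mul_of_nonneg_left (hKH s hs) hσζ.le
      calc Real.exp (ζ * s) * F s ≤ Real.exp (ζ * s) * ((σ - ζ) * H s) := h2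
        _ = (σ - ζ) * (Real.exp (ζ * s) * H s) := by ring
        _ ≤ (σ - ζ) * K := h3
    -- reduce to m t₀ ≤ K
    suffices hmt : m t₀ ≤ K by
      simp only [hmdef, hKdef] at hmt
      exact (mul_le_mul_iff_right₀ (Real.exp_pos (ζ * t₀))).mp hmt
    by_contra hKc
    push_neg at hKc
    have hexpc : Continuous fun t : ℝ => Real.exp (ζ * t) := by fun_prop
    have hmcont : ContinuousOn m (Set.Icc 0 T) := hexpc.continuousOn.mul hMcont
    -- the last time where m ≤ K
    set S : Set ℝ := {t : ℝ | t ∈ Set.Icc 0 t₀ ∧ m t ≤ K} with hSdef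
    have hm0K : m 0 ≤ K := by
      simp only [hmdef]
      rw [mul_zero, Real.exp_zero, one_mul]
      exact hKM0
    have hS0 : (0:ℝ) ∈ S := ⟨⟨le_rfl, ht₀0.le⟩, hm0K⟩
    have hScl : IsClosed S := by
      have h1 : ContinuousOn m (Set.Icc 0 t₀) := hmcont.mono (Set.Icc_subset_Icc le_rfl ht₀T.le)
      exact h1.preimage_isClosed_of_isClosed isClosed_Icc isClosed_Iic
    have hSbdd : BddAbove S := ⟨t₀, fun t htS => htS.1.2⟩
    set t₁ := sSup S with ht₁def
    have ht₁S : t₁ ∈ S := hScl.csSup_mem ⟨0, hS0⟩ hSbdd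
    have ht₁0 : 0 ≤ t₁ := ht₁S.1.1
    have ht₁t₀ : t₁ < t₀ := by
      rcases lt_or_eq_of_le ht₁S.1.2 with h | h
      · exact h
      · exfalso; rw [h] at ht₁S; exact absurd ht₁S.2 (not_le.mpr hKc)
    -- the maximum point of m on [t₁, t₀]
    obtain ⟨τ, hτmem, hτmax⟩ := isCompact_Icc.exists_isMaxOn (s := Set.Icc t₁ t₀)
      ⟨t₁, left_mem_Icc.mpr ht₁t₀.le⟩ (hmcont.mono (Set.Icc_subset_Icc ht₁0 ht₀T.le))
    have hmt₀τ : m t₀ ≤ m τ := hτmax (right_mem_Icc.mpr ht₁t₀.le)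
    have hτ1 : t₁ < τ := by
      rcases lt_or_eq_of_le hτmem.1 with h | h
      · exact h
      · exfalso
        have h2 := ht₁S.2
        rw [h] at h2
        linarith
    have hτ0 : 0 < τ := lt_of_le_of_lt ht₁0 hτ1
    have hτT : τ < T := lt_of_le_of_lt hτmem.2 ht₀T
    have hmτK : K < m τ := lt_of_lt_of_le hKc hmt₀τ
    have hτIoc : τ ∈ Set.Ioc (0:ℝ) t₀ := ⟨hτ0, hτmem.2⟩
    -- continuity of m at τ and the neighbourhood where m > K
    have hmca : ContinuousAt m τ := hmcont.continuousAt (Icc_mem_nhds hτ0 hτT)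
    have hev : ∀ᶠ s in 𝓝 τ, K < m s := hmca.eventually (eventually_gt_nhds hmτK)
    obtain ⟨δ₀, hδ₀pos, hδ₀⟩ := Metric.eventually_nhds_iff.mp hev
    set ε := min δ₀ τ with hεdef
    have hεpos : 0 < ε := lt_min hδ₀pos hτ0
    have hεδ : ε ≤ δ₀ := min_le_left _ _
    have hετ : ε ≤ τ := min_le_right _ _
    -- select good times approaching τ from the left
    have hsel : ∀ n : ℕ, ∃ t', t' ∈ Set.Ioo (τ - ε / (n+1)) τ ∧
        ((∀ x ∈ Set.Ioo (0:ℝ) 1, HasDerivAt (u t') (ux t' x) x) ∧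
        (∀ x ∈ Set.Ioo (0:ℝ) 1, HasDerivAt (ux t') (uxx t' x) x) ∧
        ContinuousOn (uxx t') (Set.Ioo 0 1) ∧
        (∀ x ∈ Set.Ioo (0:ℝ) 1,
          ut t' x = a t' x * uxx t' x + b t' x * ux t' x + c t' x * u t' x + f t' x)) := by
      intro n
      have hn1 : (1:ℝ) ≤ (n:ℝ) + 1 := by
        have := Nat.cast_nonneg (α := ℝ) n
        linarith
      have hεn : 0 < ε / (n+1) := by positivity
      have hεn' : ε / (n+1) ≤ ε := div_le_self hεpos.le hn1
      have hsub : Set.Ioo (τ - ε / (n+1)) τ ⊆ Set.Ioo 0 T := by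
        intro y hy
        refine ⟨?_, lt_trans hy.2 hτT⟩
        have := hy.1
        linarith
      have hμ : (volume.restrict (Set.Ioo 0 T)) (Set.Ioo (τ - ε/(n+1)) τ) ≠ 0 := by
        rw [Measure.restrict_apply measurableSet_Ioo,
          Set.inter_eq_self_of_subset_left hsub, Real.volume_Ioo]
        have he : τ - (τ - ε/(n+1)) = ε/(n+1) := by ring
        rw [he]
        simp only [ne_eq, ENNReal.ofReal_eq_zero, not_le]
        exact hεn
      have hae := ae_restrict_of_ae (s := Set.Ioo (τ - ε/(n+1)) τ) hC2_pde
      exact MeasureTheory.Measure.exists_mem_of_measure_ne_zero_of_ae hμ hae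
    choose tseq htmem htP using hsel
    have htlb : ∀ n : ℕ, τ - ε ≤ τ - ε / (n+1) := by
      intro n
      have hn1 : (1:ℝ) ≤ (n:ℝ) + 1 := by
        have := Nat.cast_nonneg (α := ℝ) n
        linarith
      have := div_le_self hεpos.le hn1
      linarith
    have ht0 : ∀ n, 0 < tseq n := by
      intro n
      have h1 := (htmem n).1
      have h2 := htlb n
      linarith
    have htIoo : ∀ n, tseq n ∈ Set.Ioo (0:ℝ) T :=
      fun n => ⟨ht0 n, lt_trans (htmem n).2 hτT⟩
    have htIoc : ∀ n, tseq n ∈ Set.Ioc (0:ℝ) t₀ :=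
      fun n => ⟨ht0 n, le_of_lt (lt_of_lt_of_le (htmem n).2 hτmem.2)⟩
    have htK : ∀ n, K < m (tseq n) := by
      intro n
      apply hδ₀
      have h1 := (htmem n).1
      have h2 := (htmem n).2
      have h3 := htlb n
      rw [Real.dist_eq, abs_lt]
      constructor <;> linarith
    -- the maximising points in space
    have hxsel : ∀ n : ℕ, ∃ x ∈ Set.Icc (0:ℝ) 1,
        (∀ y ∈ Set.Icc (0:ℝ) 1, |u (tseq n) y| ≤ |u (tseq n) x|) ∧ M (tseq n) = |u (tseq n) x| :=
      fun n => hM_ex (tseq n) ⟨(ht0 n).le, (htIoo n).2.le⟩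
    choose xseq hxmem hxmax hxval using hxsel
    have hbound : ∀ n, |u (tseq n) 0| < |u (tseq n) (xseq n)| ∧
        |u (tseq n) 1| < |u (tseq n) (xseq n)| := by
      intro n
      have h0 := hKu0 (tseq n) (htIoc n)
      have h1 := hKu1 (tseq n) (htIoc n)
      have hKn := htK n
      have hm : m (tseq n) = Real.exp (ζ * tseq n) * |u (tseq n) (xseq n)| := by
        simp only [hmdef]; rw [hxval n]
      rw [hm] at hKn
      constructor
      · exact lt_of_mul_lt_mul_left (lt_of_le_of_lt h0 hKn) (Real.exp_nonneg _)
      · exact lt_of_mul_lt_mul_left (lt_of_le_of_lt h1 hKn) (Real.exp_nonneg _)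
    have hxIoo : ∀ n, xseq n ∈ Set.Ioo (0:ℝ) 1 := by
      intro n
      obtain ⟨h0, h1⟩ := hbound n
      refine ⟨lt_of_le_of_ne (hxmem n).1 ?_, lt_of_le_of_ne (hxmem n).2 ?_⟩
      · intro h; rw [← h] at h0; exact lt_irrefl _ h0
      · intro h; rw [h] at h1; exact lt_irrefl _ h1
    -- the key differential inequality at good times
    have hQ : ∀ n, Real.exp (ζ * tseq n) *
        (ζ * |u (tseq n) (xseq n)| +
          u (tseq n) (xseq n) * ut (tseq n) (xseq n) / |u (tseq n) (xseq n)|)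
        ≤ -(σ - ζ) * (m (tseq n) - K) := by
      intro n
      obtain ⟨hd1, hd2, _, hpde⟩ := htP n
      have haxn := ha (tseq n) (htIoo n) (xseq n) (hxIoo n)
      have hcxn := hc (tseq n) (htIoo n) (xseq n) (hxIoo n)
      have hfxn := hF_le (tseq n) ⟨ht0 n, (htIoo n).2.le⟩ (xseq n) (hxIoo n)
      have hMn := hxval n
      have hMn0 : 0 < |u (tseq n) (xseq n)| :=
        lt_of_le_of_lt (abs_nonneg _) (hbound n).1
      have hune : u (tseq n) (xseq n) ≠ 0 := abs_pos.mp hMn0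
      have hQs : u (tseq n) (xseq n) * ut (tseq n) (xseq n) / |u (tseq n) (xseq n)|
          ≤ -σ * M (tseq n) + F (tseq n) := by
        rcases lt_or_gt_of_ne hune with huneg | hupos
        · -- u < 0 at the max of |u|: interior minimum of u
          have hmaxU : ∀ y ∈ Set.Icc (0:ℝ) 1, -(u (tseq n) y) ≤ -(u (tseq n) (xseq n)) := by
            intro y hy
            have h := hxmax n y hy
            rw [abs_of_neg huneg] at h
            linarith [neg_abs_le (u (tseq n) y)]
          have hd1' : ∀ y ∈ Set.Ioo (0:ℝ) 1,
              HasDerivAt (fun y => -(u (tseq n) y)) (-(ux (tseq n) y)) y :=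
            fun y hy => (hd1 y hy).neg
          have hd2' : HasDerivAt (fun y => -(ux (tseq n) y)) (-(uxx (tseq n) (xseq n))) (xseq n) :=
            (hd2 (xseq n) (hxIoo n)).neg
          have huxx0 : 0 ≤ uxx (tseq n) (xseq n) := by
            have := lem4_3_aux_second_deriv_nonpos (hxIoo n) hd1' hd2' hmaxU
            linarith
          have hlocmax : IsLocalMax (fun y => -(u (tseq n) y)) (xseq n) :=
            Filter.eventually_of_mem (Icc_mem_nhds (hxIoo n).1 (hxIoo n).2) hmaxU
          have hux0 : ux (tseq n) (xseq n) = 0 := by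
            have := hlocmax.hasDerivAt_eq_zero (hd1 (xseq n) (hxIoo n)).neg
            linarith
          have hdiv : u (tseq n) (xseq n) * ut (tseq n) (xseq n) / |u (tseq n) (xseq n)|
              = -(ut (tseq n) (xseq n)) := by
            rw [abs_of_neg huneg, div_neg, mul_div_cancel_left₀ _ hune]
          rw [hdiv, hpde (xseq n) (hxIoo n), hux0, mul_zero]
          have hMeq : M (tseq n) = -(u (tseq n) (xseq n)) := by
            rw [hMn, abs_of_neg huneg]
          have h2 : c (tseq n) (xseq n) * (-(u (tseq n) (xseq n)))
              ≤ -σ * (-(u (tseq n) (xseq n))) :=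
            mul_le_mul_of_nonneg_right hcxn (by linarith)
          have h3 : -(f (tseq n) (xseq n)) ≤ F (tseq n) :=
            le_trans (neg_le_abs _) hfxn
          have h1 : 0 ≤ a (tseq n) (xseq n) * uxx (tseq n) (xseq n) := mul_nonneg haxn huxx0
          rw [hMeq]
          nlinarith
        · -- u > 0 at the max of |u|: interior maximum of u
          have hmaxU : ∀ y ∈ Set.Icc (0:ℝ) 1, u (tseq n) y ≤ u (tseq n) (xseq n) := by
            intro y hy
            have h := hxmax n y hy
            rw [abs_of_pos hupos] at h
            linarith [le_abs_self (u (tseq n) y)]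
          have huxx0 : uxx (tseq n) (xseq n) ≤ 0 :=
            lem4_3_aux_second_deriv_nonpos (hxIoo n) hd1 (hd2 (xseq n) (hxIoo n)) hmaxU
          have hlocmax : IsLocalMax (u (tseq n)) (xseq n) :=
            Filter.eventually_of_mem (Icc_mem_nhds (hxIoo n).1 (hxIoo n).2) hmaxU
          have hux0 : ux (tseq n) (xseq n) = 0 :=
            hlocmax.hasDerivAt_eq_zero (hd1 (xseq n) (hxIoo n))
          have hdiv : u (tseq n) (xseq n) * ut (tseq n) (xseq n) / |u (tseq n) (xseq n)|
              = ut (tseq n) (xseq n) := by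
            rw [abs_of_pos hupos, mul_div_cancel_left₀ _ hune]
          rw [hdiv, hpde (xseq n) (hxIoo n), hux0, mul_zero]
          have hMeq : M (tseq n) = u (tseq n) (xseq n) := by
            rw [hMn, abs_of_pos hupos]
          have h2 : c (tseq n) (xseq n) * u (tseq n) (xseq n)
              ≤ -σ * u (tseq n) (xseq n) :=
            mul_le_mul_of_nonneg_right hcxn hupos.le
          have h3 : f (tseq n) (xseq n) ≤ F (tseq n) :=
            le_trans (le_abs_self _) hfxn
          have h1 : a (tseq n) (xseq n) * uxx (tseq n) (xseq n) ≤ 0 := by nlinarith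
          rw [hMeq]
          nlinarith
      have hKFn := hKF (tseq n) (htIoc n)
      calc Real.exp (ζ * tseq n) *
          (ζ * |u (tseq n) (xseq n)| +
            u (tseq n) (xseq n) * ut (tseq n) (xseq n) / |u (tseq n) (xseq n)|)
          ≤ Real.exp (ζ * tseq n) * (ζ * M (tseq n) + (-σ * M (tseq n) + F (tseq n))) := by
            apply mul_le_mul_of_nonneg_left _ (Real.exp_nonneg _)
            rw [hMn] at hQs ⊢
            exact add_le_add_right hQs _
        _ = (ζ - σ) * m (tseq n) + Real.exp (ζ * tseq n) * F (tseq n) := by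
            simp only [hmdef]; ring
        _ ≤ (ζ - σ) * m (tseq n) + (σ - ζ) * K := add_le_add_right hKFn _
        _ = -(σ - ζ) * (m (tseq n) - K) := by ring
    -- pass to a convergent subsequence of maximisers
    obtain ⟨xs, hxsIcc, φ, hφmono, hφtend⟩ := isCompact_Icc.tendsto_subseq hxmem
    have htεtend : Tendsto (fun n : ℕ => τ - ε / (n+1)) atTop (𝓝 τ) := by
      have h1 : Tendsto (fun n : ℕ => ε * (1 / ((n:ℝ)+1))) atTop (𝓝 (ε * 0)) :=
        tendsto_one_div_add_atTop_nhds_zero_nat.const_mul ε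
      have h2 : Tendsto (fun n : ℕ => ε / ((n:ℝ)+1)) atTop (𝓝 0) := by
        simpa [div_eq_mul_inv] using h1
      simpa using tendsto_const_nhds.sub h2
    have httend : Tendsto tseq atTop (𝓝 τ) := by
      refine tendsto_of_tendsto_of_tendsto_of_le_of_le htεtend tendsto_const_nhds ?_ ?_
      · exact fun n => (htmem n).1.le
      · exact fun n => (htmem n).2.le
    have httendφ : Tendsto (fun n => tseq (φ n)) atTop (𝓝 τ) := httend.comp hφmono.tendsto_atTop
    have hpairtend : Tendsto (fun n => ((tseq (φ n), xseq (φ n)) : ℝ × ℝ)) atTop (𝓝 (τ, xs)) :=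
      httendφ.prodMk_nhds hφtend
    have hulim : Tendsto (fun n => u (tseq (φ n)) (xseq (φ n))) atTop (𝓝 (u τ xs)) := by
      have hcw := hu_cont (τ, xs) (Set.mk_mem_prod ⟨hτ0.le, hτT.le⟩ hxsIcc)
      have hmemseq : ∀ n, ((tseq (φ n), xseq (φ n)) : ℝ × ℝ) ∈
          Set.Icc (0:ℝ) T ×ˢ Set.Icc (0:ℝ) 1 :=
        fun n => Set.mk_mem_prod ⟨(ht0 _).le, (htIoo _).2.le⟩ (hxmem _)
      exact hcw.tendsto.comp
        (tendsto_nhdsWithin_iff.mpr ⟨hpairtend, Filter.Eventually.of_forall hmemseq⟩)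
    have hutlim : Tendsto (fun n => ut (tseq (φ n)) (xseq (φ n))) atTop (𝓝 (ut τ xs)) := by
      have hcw := hut_cont (τ, xs) (Set.mk_mem_prod ⟨hτ0, hτT⟩ hxsIcc)
      have hmemseq : ∀ n, ((tseq (φ n), xseq (φ n)) : ℝ × ℝ) ∈
          Set.Ioo (0:ℝ) T ×ˢ Set.Icc (0:ℝ) 1 :=
        fun n => Set.mk_mem_prod (htIoo _) (hxmem _)
      exact hcw.tendsto.comp
        (tendsto_nhdsWithin_iff.mpr ⟨hpairtend, Filter.Eventually.of_forall hmemseq⟩)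
    have hMlim : Tendsto (fun n => M (tseq (φ n))) atTop (𝓝 (M τ)) := by
      have hca : ContinuousAt M τ := hMcont.continuousAt (Icc_mem_nhds hτ0 hτT)
      exact hca.tendsto.comp httendφ
    have hmlim : Tendsto (fun n => m (tseq (φ n))) atTop (𝓝 (m τ)) := hmca.tendsto.comp httendφ
    have habslim : Tendsto (fun n => |u (tseq (φ n)) (xseq (φ n))|) atTop (𝓝 (|u τ xs|)) :=
      hulim.abs
    have hMeqτ : |u τ xs| = M τ := by
      have h1 : Tendsto (fun n => |u (tseq (φ n)) (xseq (φ n))|) atTop (𝓝 (M τ)) := by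
        have he : (fun n => |u (tseq (φ n)) (xseq (φ n))|) = fun n => M (tseq (φ n)) := by
          funext n; exact (hxval (φ n)).symm
        rw [he]; exact hMlim
      exact tendsto_nhds_unique habslim h1
    have hMτpos : 0 < M τ := by
      have h := hmτK
      simp only [hmdef] at h
      nlinarith [Real.exp_pos (ζ * τ), hK0]
    have huτne : u τ xs ≠ 0 := by
      intro h
      rw [h, abs_zero] at hMeqτ
      linarith
    have hxsIoo : xs ∈ Set.Ioo (0:ℝ) 1 := by
      have h0 := hKu0 τ hτIoc
      have h1 := hKu1 τ hτIoc
      have hKm : K < Real.exp (ζ * τ) * M τ := by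
        have := hmτK; simp only [hmdef] at this; exact this
      have hb0 : |u τ 0| < M τ :=
        lt_of_mul_lt_mul_left (lt_of_le_of_lt h0 hKm) (Real.exp_nonneg _)
      have hb1 : |u τ 1| < M τ :=
        lt_of_mul_lt_mul_left (lt_of_le_of_lt h1 hKm) (Real.exp_nonneg _)
      refine ⟨lt_of_le_of_ne hxsIcc.1 ?_, lt_of_le_of_ne hxsIcc.2 ?_⟩
      · intro h
        rw [← h] at hMeqτ
        exact absurd hMeqτ (ne_of_lt hb0)
      · intro h
        rw [h] at hMeqτ
        exact absurd hMeqτ (ne_of_lt hb1)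
    have habsne : |u τ xs| ≠ 0 := ne_of_gt (abs_pos.mpr huτne)
    -- pass to the limit in the differential inequality
    have hΦlim : Tendsto (fun n => Real.exp (ζ * tseq (φ n)) *
        (ζ * |u (tseq (φ n)) (xseq (φ n))| +
          u (tseq (φ n)) (xseq (φ n)) * ut (tseq (φ n)) (xseq (φ n)) /
            |u (tseq (φ n)) (xseq (φ n))|))
        atTop (𝓝 (Real.exp (ζ * τ) * (ζ * |u τ xs| + u τ xs * ut τ xs / |u τ xs|))) := by
      have he : Tendsto (fun n => Real.exp (ζ * tseq (φ n))) atTop (𝓝 (Real.exp (ζ * τ))) :=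
        (Real.continuous_exp.tendsto _).comp (httendφ.const_mul ζ)
      exact he.mul ((habslim.const_mul ζ).add ((hulim.mul hutlim).div habslim habsne))
    have hΦτ : Real.exp (ζ * τ) * (ζ * |u τ xs| + u τ xs * ut τ xs / |u τ xs|)
        ≤ -(σ - ζ) * (m τ - K) := by
      have hRHSlim : Tendsto (fun n => -(σ - ζ) * (m (tseq (φ n)) - K)) atTop
          (𝓝 (-(σ - ζ) * (m τ - K))) := (hmlim.sub tendsto_const_nhds).const_mul _
      exact le_of_tendsto_of_tendsto' hΦlim hRHSlim (fun n => hQ (φ n))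
    have hΦneg : Real.exp (ζ * τ) * (ζ * |u τ xs| + u τ xs * ut τ xs / |u τ xs|) < 0 := by
      apply lt_of_le_of_lt hΦτ
      have h1 : 0 < m τ - K := sub_pos.mpr hmτK
      nlinarith
    -- the weighted profile along xs has a negative derivative at τ
    have hD : HasDerivAt (fun s => Real.exp (ζ * s) * |u s xs|)
        (Real.exp (ζ * τ) * (ζ * |u τ xs| + u τ xs * ut τ xs / |u τ xs|)) τ := by
      have hexp : HasDerivAt (fun s : ℝ => Real.exp (ζ * s)) (Real.exp (ζ * τ) * ζ) τ := by
        have h1 : HasDerivAt (fun s : ℝ => ζ * s) ζ τ := by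
          simpa using (hasDerivAt_id τ).const_mul ζ
        exact h1.exp
      have huderiv : HasDerivAt (fun s => u s xs) (ut τ xs) τ := hut τ ⟨hτ0, hτT⟩ xs hxsIcc
      have hucont : ContinuousAt (fun s => u s xs) τ := huderiv.continuousAt
      rcases lt_or_gt_of_ne huτne with hneg | hpos
      · have hevu : ∀ᶠ s in 𝓝 τ, u s xs < 0 := hucont.eventually (eventually_lt_nhds hneg)
        have heq : (fun s => Real.exp (ζ * s) * |u s xs|) =ᶠ[𝓝 τ]
            fun s => Real.exp (ζ * s) * (-(u s xs)) :=
          hevu.mono (fun s hs => by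
            show Real.exp (ζ * s) * |u s xs| = Real.exp (ζ * s) * (-(u s xs))
            rw [abs_of_neg hs])
        have hD0 : HasDerivAt (fun s => Real.exp (ζ * s) * (-(u s xs)))
            (Real.exp (ζ * τ) * ζ * (-(u τ xs)) + Real.exp (ζ * τ) * (-(ut τ xs))) τ :=
          hexp.mul huderiv.neg
        have hres := hD0.congr_of_eventuallyEq heq
        refine hres.congr_deriv ?_
        rw [abs_of_neg hneg, div_neg, mul_div_cancel_left₀ _ huτne]
        ring
      · have hevu : ∀ᶠ s in 𝓝 τ, 0 < u s xs := hucont.eventually (eventually_gt_nhds hpos)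
        have heq : (fun s => Real.exp (ζ * s) * |u s xs|) =ᶠ[𝓝 τ]
            fun s => Real.exp (ζ * s) * u s xs :=
          hevu.mono (fun s hs => by
            show Real.exp (ζ * s) * |u s xs| = Real.exp (ζ * s) * u s xs
            rw [abs_of_pos hs])
        have hD0 : HasDerivAt (fun s => Real.exp (ζ * s) * u s xs)
            (Real.exp (ζ * τ) * ζ * u τ xs + Real.exp (ζ * τ) * ut τ xs) τ :=
          hexp.mul huderiv
        have hres := hD0.congr_of_eventuallyEq heq
        refine hres.congr_deriv ?_
        rw [abs_of_pos hpos, mul_div_cancel_left₀ _ huτne]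
        ring
    -- contradiction: m must be larger slightly before τ
    have hgm : ∀ s ∈ Set.Icc (0:ℝ) T, Real.exp (ζ * s) * |u s xs| ≤ m s := by
      intro s hs
      exact mul_le_mul_of_nonneg_left (hM_le s hs xs hxsIcc) (Real.exp_nonneg _)
    have hgτ : Real.exp (ζ * τ) * |u τ xs| = m τ := by
      simp only [hmdef]; rw [hMeqτ]
    have hslope := hasDerivAt_iff_tendsto_slope.mp hD
    have hslope' : Tendsto (slope (fun s => Real.exp (ζ * s) * |u s xs|) τ) (𝓝[<] τ)
        (𝓝 (Real.exp (ζ * τ) * (ζ * |u τ xs| + u τ xs * ut τ xs / |u τ xs|))) :=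
      hslope.mono_left (nhdsWithin_mono _ (fun s hs => ne_of_lt hs))
    have hevs : ∀ᶠ s in 𝓝[<] τ, slope (fun s => Real.exp (ζ * s) * |u s xs|) τ s < 0 :=
      hslope'.eventually (eventually_lt_nhds hΦneg)
    have hmemf : ∀ᶠ s in 𝓝[<] τ, s ∈ Set.Ioo t₁ τ :=
      Filter.eventually_of_mem (Ioo_mem_nhdsLT_of_mem ⟨hτ1, le_rfl⟩) (fun _ h => h)
    obtain ⟨s, hs1, hs2⟩ := (hevs.and hmemf).exists
    have hsτ : s < τ := hs2.2
    rw [slope_def_field] at hs1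
    have hgs : Real.exp (ζ * τ) * |u τ xs| < Real.exp (ζ * s) * |u s xs| := by
      by_contra hle
      push_neg at hle
      have hd0 : s - τ < 0 := by linarith
      have h2 : 0 ≤ (Real.exp (ζ * s) * |u s xs| - Real.exp (ζ * τ) * |u τ xs|) / (s - τ) :=
        div_nonneg_of_nonpos (by linarith) hd0.le
      linarith
    have hsmem : s ∈ Set.Icc t₁ t₀ := ⟨hs2.1.le, le_trans hsτ.le hτmem.2⟩
    have hsIccT : s ∈ Set.Icc (0:ℝ) T :=
      ⟨le_trans ht₁0 hsmem.1, le_trans hsmem.2 ht₀T.le⟩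
    have hfinal : m τ < m s := by
      rw [← hgτ]
      exact lt_of_lt_of_le hgs (hgm s hsIccT)
    exact absurd (hτmax hsmem) (not_le.mpr hfinal)
  -- conclude, including the endpoint t = T by a limiting argument
  intro t ht
  show M t ≤ max (Real.exp (-ζ * t) * M 0)
      (sSup ((fun s => H s * Real.exp (-ζ * (t - s))) '' Set.Ioc 0 t))
  rcases eq_or_lt_of_le ht.2 with heq | hlt
  swap
  · exact key t ⟨ht.1, hlt⟩
  · subst heq
    set RT := max (Real.exp (-ζ * t) * M 0)
      (sSup ((fun s => H s * Real.exp (-ζ * (t - s))) '' Set.Ioc 0 t)) with hRT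
    have hstep : ∀ t' ∈ Set.Ioo (0:ℝ) t, M t' ≤ Real.exp (ζ * (t - t')) * RT := by
      intro t' ht'
      refine (key t' ht').trans (max_le ?_ ?_)
      · have h0 : Real.exp (-ζ * t) * M 0 ≤ RT := le_max_left _ _
        have h2 := mul_le_mul_of_nonneg_left h0 (Real.exp_nonneg (ζ * (t - t')))
        refine le_trans (le_of_eq ?_) h2
        rw [← mul_assoc, ← Real.exp_add]
        congr 2
        ring
      · refine csSup_le ⟨H t' * Real.exp (-ζ * (t' - t')), mem_image_of_mem _ ⟨ht'.1, le_rfl⟩⟩ ?_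
        rintro y ⟨s, hs, rfl⟩
        show H s * Real.exp (-ζ * (t' - s)) ≤ Real.exp (ζ * (t - t')) * RT
        have hsT : s ∈ Set.Ioc (0:ℝ) t := ⟨hs.1, hs.2.trans ht'.2.le⟩
        have h1 : H s * Real.exp (-ζ * (t - s)) ≤ RT :=
          le_max_of_le_right (le_csSup (hBdd t ⟨hT, le_rfl⟩) (mem_image_of_mem _ hsT))
        have h2 := mul_le_mul_of_nonneg_left h1 (Real.exp_nonneg (ζ * (t - t')))
        refine le_trans (le_of_eq ?_) h2
        have he : Real.exp (-ζ * (t' - s)) = Real.exp (ζ * (t - t')) * Real.exp (-ζ * (t - s)) := by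
          rw [← Real.exp_add]; congr 1; ring
        rw [he]; ring
    have hnb : (𝓝[Set.Ioo (0:ℝ) t] t).NeBot := by
      apply mem_closure_iff_nhdsWithin_neBot.mp
      rw [closure_Ioo hT.ne]
      exact ⟨hT.le, le_rfl⟩
    have h1 : Tendsto M (𝓝[Set.Ioo (0:ℝ) t] t) (𝓝 (M t)) :=
      (hMcont t ⟨hT.le, le_rfl⟩).mono_left (nhdsWithin_mono t Set.Ioo_subset_Icc_self)
    have h2 : Tendsto (fun t' => Real.exp (ζ * (t - t')) * RT) (𝓝[Set.Ioo (0:ℝ) t] t)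
        (𝓝 RT) := by
      have hcont2 : Continuous (fun t' : ℝ => Real.exp (ζ * (t - t')) * RT) := by fun_prop
      have h3 := (hcont2.tendsto t).mono_left (nhdsWithin_le_nhds (s := Set.Ioo (0:ℝ) t))
      simpa using h3
    refine le_of_tendsto_of_tendsto h1 h2 ?_
    filter_upwards [eventually_mem_nhdsWithin] with t' ht' using hstep t' ht'
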